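/- Let A, B, X be bounded operators on a complex Hilbert space H, let r ≥ 0, and let p, q > 1 satisfy 1/p + 1/q = 1 with p·r ≥ 2 and q·r ≥ 2. Then for every unit vector k ∈ H, |⟨A* X B k, k⟩|^r ≤ ‖X‖^r · ⟨((1/p)(A*A)^(pr/2) + (1/q)(B*B)^(qr/2)) k, k⟩. -/

import Mathlib

open scoped InnerProductSpace
open ContinuousLinearMap Complex

variable {H : Type*} [NormedAddCommGroup H] [InnerProductSpace ℂ H] [CompleteSpace H]

noncomputable def opow (T : H →L[ℂ] H) (e : ℝ) : H →L[ℂ] H :=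
  cfc (fun t : ℝ => t ^ e) T

/-- The absolute value `|T| = (T*T)^(1/2)` of an operator. -/
noncomputable def oabs (T : H →L[ℂ] H) : H →L[ℂ] H :=
  cfc Real.sqrt (ContinuousLinearMap.adjoint T * T)

lemma tangent_line_le_rpow {c s : ℝ} (hc : 0 ≤ c) (hs : 1 ≤ s) {t : ℝ} (ht : 0 ≤ t) :
    (c ^ s - s * c ^ (s - 1) * c) + s * c ^ (s - 1) * t ≤ t ^ s := by
  rcases eq_or_lt_of_le hc with hc0 | hc0
  · rcases eq_or_lt_of_le hs with hs1 | hs1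
    · simp [← hc0, ← hs1, Real.rpow_one]
    · simp [← hc0, Real.zero_rpow (by linarith : s ≠ 0),
        Real.zero_rpow (by intro h; apply absurd h; intro h'; linarith [sub_eq_zero.mp h'] : s - 1 ≠ 0),
        Real.rpow_nonneg ht]
  · have key := one_add_mul_self_le_rpow_one_add (s := t / c - 1) (by
      have : 0 ≤ t / c := div_nonneg ht hc0.le
      linarith) hs
    have h1 : (1 : ℝ) + (t / c - 1) = t / c := by ring
    rw [h1] at key
    have hcs : 0 < c ^ s := Real.rpow_pos_of_pos hc0 s
    have key2 : c ^ s * (1 + s * (t / c - 1)) ≤ c ^ s * (t / c) ^ s :=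
      mul_le_mul_of_nonneg_left key hcs.le
    have h2 : c ^ s * (t / c) ^ s = t ^ s := by
      rw [Real.div_rpow ht hc0.le]
      field_simp
    rw [h2] at key2
    have h3 : c ^ (s - 1) = c ^ s / c := Real.rpow_sub_one hc0.ne' s
    calc (c ^ s - s * c ^ (s - 1) * c) + s * c ^ (s - 1) * t
        = c ^ s * (1 + s * (t / c - 1)) := by rw [h3]; field_simp; ring
      _ ≤ t ^ s := key2

lemma re_inner_mono {S T : H →L[ℂ] H} (h : S ≤ T) (k : H) :
    (⟪S k, k⟫_ℂ).re ≤ (⟪T k, k⟫_ℂ).re := by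
  rw [ContinuousLinearMap.le_def] at h
  have := h.inner_nonneg_left k
  simp only [ContinuousLinearMap.sub_apply, inner_sub_left, map_sub,
    RCLike.re_to_complex] at this
  have h' := (Complex.nonneg_iff.mp this).1
  rw [Complex.sub_re] at h'
  linarith

lemma mccarthy (T : H →L[ℂ] H) (hT : 0 ≤ T) {s : ℝ} (hs : 1 ≤ s) (k : H) (hk : ‖k‖ = 1) :
    (⟪T k, k⟫_ℂ).re ^ s ≤ (⟪opow T s k, k⟫_ℂ).re := by
  have hTpos : T.IsPositive := (ContinuousLinearMap.nonneg_iff_isPositive T).mp hT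
  have hTsa : IsSelfAdjoint T := hTpos.isSelfAdjoint
  set c : ℝ := (⟪T k, k⟫_ℂ).re with hc_def
  have hc : 0 ≤ c := (Complex.nonneg_iff.mp (hTpos.inner_nonneg_left k)).1
  set b : ℝ := s * c ^ (s - 1) with hb_def
  set a : ℝ := c ^ s - b * c with ha_def
  have hcont : ContinuousOn (fun t : ℝ => t ^ s) (spectrum ℝ T) := fun x _ =>
    (Real.continuousAt_rpow_const x s (Or.inr (by linarith))).continuousWithinAt
  have hmono : cfc (fun t : ℝ => a + b * t) T ≤ opow T s := by
    refine cfc_mono (fun t ht => ?_) (by fun_prop) hcont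
    have ht0 : 0 ≤ t := spectrum_nonneg_of_nonneg hT ht
    have := tangent_line_le_rpow hc hs ht0
    rw [ha_def, hb_def]
    linarith
  have heq : cfc (fun t : ℝ => a + b * t) T = algebraMap ℝ (H →L[ℂ] H) a + b • T := by
    rw [cfc_add (a := T) (R := ℝ) (fun _ => a) (fun t => b * t) (by fun_prop) (by fun_prop), cfc_const a T hTsa,
      cfc_const_mul_id b T hTsa]
  have hre : (⟪(cfc (fun t : ℝ => a + b * t) T) k, k⟫_ℂ).re = a + b * c := by
    rw [heq]
    rw [ContinuousLinearMap.add_apply, inner_add_left]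
    have h1 : algebraMap ℝ (H →L[ℂ] H) a = a • (1 : H →L[ℂ] H) :=
      Algebra.algebraMap_eq_smul_one a
    rw [h1]
    have hsk : ∀ (r : ℝ) (S : H →L[ℂ] H), ((r • S) k) = (r : ℂ) • (S k) := by
      intro r S
      rw [ContinuousLinearMap.smul_apply]
      exact RCLike.real_smul_eq_coe_smul (K := ℂ) r (S k)
    rw [hsk, hsk, inner_smul_left, inner_smul_left]
    have hkk : ⟪k, k⟫_ℂ = 1 := by
      rw [inner_self_eq_norm_sq_to_K, hk]; norm_num
    simp [hkk, Complex.ofReal_re, hc_def, hk]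
  have : a + b * c ≤ (⟪opow T s k, k⟫_ℂ).re := hre ▸ re_inner_mono hmono k
  have habc : a + b * c = c ^ s := by rw [ha_def]; ring
  linarith [habc ▸ this]

lemma norm_apply_sq_eq (A : H →L[ℂ] H) (k : H) :
    (⟪(ContinuousLinearMap.adjoint A * A) k, k⟫_ℂ).re = ‖A k‖ ^ 2 := by
  have : (ContinuousLinearMap.adjoint A * A) k = ContinuousLinearMap.adjoint A (A k) := rfl
  rw [this, ContinuousLinearMap.adjoint_inner_left, inner_self_eq_norm_sq_to_K]
  norm_cast

lemma norm_rpow_le_opow (A : H →L[ℂ] H) {s : ℝ} (hs : 1 ≤ s) (k : H) (hk : ‖k‖ = 1) :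
    ‖A k‖ ^ (2 * s) ≤ (⟪opow (ContinuousLinearMap.adjoint A * A) s k, k⟫_ℂ).re := by
  have hpos : (0 : H →L[ℂ] H) ≤ ContinuousLinearMap.adjoint A * A := by
    simpa [ContinuousLinearMap.star_eq_adjoint] using star_mul_self_nonneg A
  have h1 : ‖A k‖ ^ (2 * s) = ((⟪(ContinuousLinearMap.adjoint A * A) k, k⟫_ℂ).re) ^ s := by
    rw [norm_apply_sq_eq, ← Real.rpow_natCast ‖A k‖ 2, ← Real.rpow_mul (norm_nonneg _)]
    norm_num
  rw [h1]
  exact mccarthy _ hpos hs k hk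

theorem berezin_pointwise_holder (A B X : H →L[ℂ] H) (r p q : ℝ) (hr : 0 ≤ r)
    (hp : 1 < p) (hq : 1 < q) (hpq : 1 / p + 1 / q = 1)
    (hpr : 2 ≤ p * r) (hqr : 2 ≤ q * r) (k : H) (hk : ‖k‖ = 1) :
    ‖⟪(ContinuousLinearMap.adjoint A * X * B) k, k⟫_ℂ‖ ^ r ≤
      ‖X‖ ^ r *
        (⟪((1 / p) • opow (ContinuousLinearMap.adjoint A * A) (p * r / 2) +
            (1 / q) • opow (ContinuousLinearMap.adjoint B * B) (q * r / 2)) k, k⟫_ℂ).re := by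
  have hp0 : 0 < p := lt_trans one_pos hp
  have hq0 : 0 < q := lt_trans one_pos hq
  -- Step 1: bound the inner product
  have h1 : ‖⟪(ContinuousLinearMap.adjoint A * X * B) k, k⟫_ℂ‖ ≤ ‖X‖ * (‖A k‖ * ‖B k‖) := by
    have he : (ContinuousLinearMap.adjoint A * X * B) k =
        ContinuousLinearMap.adjoint A (X (B k)) := rfl
    rw [he, ContinuousLinearMap.adjoint_inner_left]
    calc ‖⟪X (B k), A k⟫_ℂ‖ ≤ ‖X (B k)‖ * ‖A k‖ := norm_inner_le_norm _ _
      _ ≤ (‖X‖ * ‖B k‖) * ‖A k‖ :=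
          mul_le_mul_of_nonneg_right (X.le_opNorm _) (norm_nonneg _)
      _ = ‖X‖ * (‖A k‖ * ‖B k‖) := by ring
  -- Step 2: raise to the power r
  have h2 : ‖⟪(ContinuousLinearMap.adjoint A * X * B) k, k⟫_ℂ‖ ^ r ≤
      ‖X‖ ^ r * (‖A k‖ ^ r * ‖B k‖ ^ r) := by
    calc ‖⟪(ContinuousLinearMap.adjoint A * X * B) k, k⟫_ℂ‖ ^ r
        ≤ (‖X‖ * (‖A k‖ * ‖B k‖)) ^ r := Real.rpow_le_rpow (norm_nonneg _) h1 hr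
      _ = ‖X‖ ^ r * (‖A k‖ ^ r * ‖B k‖ ^ r) := by
          rw [Real.mul_rpow (norm_nonneg _) (by positivity),
            Real.mul_rpow (norm_nonneg _) (norm_nonneg _)]
  -- Step 3: Young's inequality + McCarthy
  have hyoung : ‖A k‖ ^ r * ‖B k‖ ^ r ≤
      ‖A k‖ ^ (p * r) / p + ‖B k‖ ^ (q * r) / q := by
    have hconj : Real.HolderConjugate p q := Real.holderConjugate_iff.mpr ⟨hp, by rw [← one_div, ← one_div]; exact hpq⟩
    have := Real.young_inequality_of_nonneg (Real.rpow_nonneg (norm_nonneg (A k)) r)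
      (Real.rpow_nonneg (norm_nonneg (B k)) r) hconj
    rwa [← Real.rpow_mul (norm_nonneg _), ← Real.rpow_mul (norm_nonneg _),
      mul_comm r p, mul_comm r q] at this
  have hA : ‖A k‖ ^ (p * r) ≤
      (⟪opow (ContinuousLinearMap.adjoint A * A) (p * r / 2) k, k⟫_ℂ).re := by
    have := norm_rpow_le_opow A (s := p * r / 2) (by linarith) k hk
    rwa [show 2 * (p * r / 2) = p * r by ring] at this
  have hB : ‖B k‖ ^ (q * r) ≤
      (⟪opow (ContinuousLinearMap.adjoint B * B) (q * r / 2) k, k⟫_ℂ).re := by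
    have := norm_rpow_le_opow B (s := q * r / 2) (by linarith) k hk
    rwa [show 2 * (q * r / 2) = q * r by ring] at this
  -- Step 4: compute the RHS inner product
  have hRHS : (⟪((1 / p) • opow (ContinuousLinearMap.adjoint A * A) (p * r / 2) +
      (1 / q) • opow (ContinuousLinearMap.adjoint B * B) (q * r / 2)) k, k⟫_ℂ).re =
      (1 / p) * (⟪opow (ContinuousLinearMap.adjoint A * A) (p * r / 2) k, k⟫_ℂ).re +
      (1 / q) * (⟪opow (ContinuousLinearMap.adjoint B * B) (q * r / 2) k, k⟫_ℂ).re := by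
    rw [ContinuousLinearMap.add_apply, inner_add_left]
    have hsk : ∀ (c : ℝ) (S : H →L[ℂ] H), ((c • S) k) = (c : ℂ) • (S k) := by
      intro c S
      rw [ContinuousLinearMap.smul_apply]
      exact RCLike.real_smul_eq_coe_smul (K := ℂ) c (S k)
    rw [hsk, hsk, inner_smul_left, inner_smul_left]
    simp only [Complex.add_re, Complex.mul_re, Complex.conj_ofReal, Complex.ofReal_re,
      Complex.ofReal_im]
    ring
  rw [hRHS]
  calc ‖⟪(ContinuousLinearMap.adjoint A * X * B) k, k⟫_ℂ‖ ^ r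
      ≤ ‖X‖ ^ r * (‖A k‖ ^ r * ‖B k‖ ^ r) := h2
    _ ≤ ‖X‖ ^ r * ((1 / p) * (⟪opow (ContinuousLinearMap.adjoint A * A) (p * r / 2) k, k⟫_ℂ).re +
        (1 / q) * (⟪opow (ContinuousLinearMap.adjoint B * B) (q * r / 2) k, k⟫_ℂ).re) := by
        refine mul_le_mul_of_nonneg_left ?_ (Real.rpow_nonneg (norm_nonneg _) r)
        calc ‖A k‖ ^ r * ‖B k‖ ^ r ≤ ‖A k‖ ^ (p * r) / p + ‖B k‖ ^ (q * r) / q := hyoung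
          _ ≤ _ := by
              have h1p : (0:ℝ) ≤ 1 / p := by positivity
              have h1q : (0:ℝ) ≤ 1 / q := by positivity
              rw [div_eq_mul_inv, div_eq_mul_inv, mul_comm _ p⁻¹, mul_comm _ q⁻¹,
                inv_eq_one_div, inv_eq_one_div]
              exact add_le_add (mul_le_mul_of_nonneg_left hA h1p)
                (mul_le_mul_of_nonneg_left hB h1q)
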